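/- (Strong Huygens principle for the homogeneous interior source.) Let F : ℝ³ → ℝ be continuous with F(z) = 0 whenever |z| > 1. For t > 0 and x ∈ ℝ³ with |x| < t, define W(t,x) = (1/4π)·∫_{2/t}^{1} ∫_{S²} (1−λ)·t⁻¹·λ⁻³·F((x/t − (1−λ)η)/λ) dσ(η) dλ, and for y ∈ ℝ³ with |y| < 1 define Ũ(y) = (1/4π)·∫_{(1−|y|)/2}^{1} ∫_{S²} (1−λ)·λ⁻³·F((y − (1−λ)η)/λ) dσ(η) dλ. Then for every (t,x) with t − |x| > 4 one has W(t,x) = t⁻¹·Ũ(x/t). -/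

import Mathlib

noncomputable section

open MeasureTheory Metric Real

/-- Euclidean `ℝ³`. -/
abbrev E3 := EuclideanSpace ℝ (Fin 3)

/-- The surface measure `σ` on the unit sphere `S² ⊆ ℝ³` (total mass `4π`). -/
def sphMeas : Measure (sphere (0 : E3) 1) := (volume : Measure E3).toSphere

/-- The representation-formula expression
`W(t,x) = (1/4π)·∫_{2/t}^{1} ∫_{S²} (1−λ)·t⁻¹·λ⁻³·F((x/t − (1−λ)η)/λ) dσ(η) dλ`. -/
def Wrep (F : E3 → ℝ) (t : ℝ) (x : E3) : ℝ :=
  (1 / (4 * π)) * ∫ s in (2 / t)..1,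
    ∫ η : sphere (0 : E3) 1,
      (1 - s) * t⁻¹ * (s ^ 3)⁻¹ * F (s⁻¹ • (t⁻¹ • x - (1 - s) • (η : E3))) ∂sphMeas

/-- The interior profile
`Ũ(y) = (1/4π)·∫_{(1−|y|)/2}^{1} ∫_{S²} (1−λ)·λ⁻³·F((y − (1−λ)η)/λ) dσ(η) dλ`. -/
def Utilde (F : E3 → ℝ) (y : E3) : ℝ :=
  (1 / (4 * π)) * ∫ s in ((1 - ‖y‖) / 2)..1,
    ∫ η : sphere (0 : E3) 1,
      (1 - s) * (s ^ 3)⁻¹ * F (s⁻¹ • (y - (1 - s) • (η : E3))) ∂sphMeas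

/-- strong Huygens principle for the homogeneous interior source:
if `F` is continuous and vanishes outside the unit ball, then for `t − |x| > 4`
one has `W(t,x) = t⁻¹·Ũ(x/t)`. -/
theorem strong_huygens_self_similar
    (F : E3 → ℝ) (hF : Continuous F) (hsupp : ∀ z : E3, 1 < ‖z‖ → F z = 0)
    (t : ℝ) (x : E3) (h : 4 < t - ‖x‖) :
    Wrep F t x = t⁻¹ * Utilde F (t⁻¹ • x) := by
  have hx0 : (0:ℝ) ≤ ‖x‖ := norm_nonneg x
  have ht4 : 4 < t := by linarith
  have ht : 0 < t := by linarith
  -- F vanishes also on the unit sphere, by continuity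
  have hsupp' : ∀ z : E3, 1 ≤ ‖z‖ → F z = 0 := by
    intro z hz
    have hev : ∀ᶠ r in nhdsWithin (1:ℝ) (Set.Ioi 1), F (r • z) = 0 := by
      filter_upwards [self_mem_nhdsWithin] with r hr
      have hr1 : (1:ℝ) < r := hr
      apply hsupp
      rw [norm_smul, Real.norm_eq_abs, abs_of_pos (by linarith : (0:ℝ) < r)]
      nlinarith
    have h1 : Filter.Tendsto (fun r : ℝ => F (r • z)) (nhdsWithin 1 (Set.Ioi 1)) (nhds (F z)) := by
      have hc : Continuous fun r : ℝ => F (r • z) :=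
        hF.comp (continuous_id.smul continuous_const)
      have := hc.tendsto 1
      simpa using this.mono_left nhdsWithin_le_nhds
    have h2 : Filter.Tendsto (fun r : ℝ => F (r • z)) (nhdsWithin 1 (Set.Ioi 1)) (nhds 0) :=
      Filter.Tendsto.congr' (by filter_upwards [hev] with r hr; exact hr.symm) tendsto_const_nhds
    exact tendsto_nhds_unique h1 h2
  set y : E3 := t⁻¹ • x with hy
  have hny : ‖y‖ = ‖x‖ / t := by
    rw [hy, norm_smul, norm_inv, Real.norm_eq_abs, abs_of_pos ht]
    ring
  set g : ℝ → ℝ := fun s =>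
    ∫ η : sphere (0 : E3) 1,
      (1 - s) * (s ^ 3)⁻¹ * F (s⁻¹ • (y - (1 - s) • (η : E3))) ∂sphMeas with hg
  set a : ℝ := 2 / t with ha
  set c : ℝ := (1 - ‖y‖) / 2 with hc
  have ha0 : 0 < a := by positivity
  have hac : a < c := by
    rw [ha, hc, hny, div_lt_div_iff₀ ht (by norm_num : (0:ℝ) < 2), sub_mul,
      div_mul_cancel₀ _ ht.ne']
    linarith
  have hc1 : c < 1 := by
    have : 0 ≤ ‖y‖ := norm_nonneg y
    rw [hc]; linarith
  -- vanishing of g on [a, c]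
  have gzero : ∀ s ∈ Set.uIcc a c, g s = 0 := by
    intro s hs
    rw [Set.uIcc_of_le hac.le] at hs
    obtain ⟨hs1, hs2⟩ := hs
    have hs0 : 0 < s := lt_of_lt_of_le ha0 hs1
    have hFz : ∀ η : sphere (0 : E3) 1, F (s⁻¹ • (y - (1 - s) • (η : E3))) = 0 := by
      intro η
      apply hsupp'
      have hηn : ‖(η : E3)‖ = 1 := by
        have := η.2
        simpa [mem_sphere_iff_norm] using this
      have hy0 : 0 ≤ ‖y‖ := norm_nonneg y
      have hs2' : s ≤ (1 - ‖y‖) / 2 := by rw [hc] at hs2; exact hs2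
      have hN : s ≤ ‖y - (1 - s) • (η : E3)‖ := by
        have h1 : ‖(1 - s) • (η : E3)‖ - ‖y‖ ≤ ‖(1 - s) • (η : E3) - y‖ :=
          norm_sub_norm_le _ _
        have h2 : ‖(1 - s) • (η : E3)‖ = 1 - s := by
          rw [norm_smul, Real.norm_eq_abs, hηn, mul_one, abs_of_pos]
          linarith
        rw [norm_sub_rev]
        linarith
      rw [norm_smul, norm_inv, Real.norm_eq_abs, abs_of_pos hs0, inv_mul_eq_div,
        one_le_div hs0]
      exact hN
    rw [hg]
    simp only [hFz, mul_zero, integral_zero]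
  -- integral of g on [a,c] is zero
  have hzero_int : (∫ s in a..c, g s) = 0 := by
    rw [intervalIntegral.integral_congr (g := fun _ => (0:ℝ)) (fun s hs => gzero s hs)]
    simp
  -- the shift of the lower limit
  have hkey : (∫ s in a..1, g s) = ∫ s in c..1, g s := by
    by_cases hint : IntervalIntegrable g volume c 1
    · have hac' : IntervalIntegrable g volume a c :=
        (intervalIntegrable_const (c := (0:ℝ))).congr_ae
          ((ae_restrict_iff' measurableSet_uIoc).mpr (Filter.Eventually.of_forall
            fun s hs => (gzero s (Set.uIoc_subset_uIcc hs)).symm))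
      rw [← intervalIntegral.integral_add_adjacent_intervals hac' hint, hzero_int, zero_add]
    · have h1 : ¬ IntervalIntegrable g volume a 1 := by
        intro hI
        exact hint (hI.mono_set (Set.uIcc_subset_uIcc
          (by rw [Set.uIcc_of_le (by linarith : a ≤ 1)]; exact ⟨hac.le, hc1.le⟩)
          (by rw [Set.uIcc_of_le (by linarith : a ≤ 1)]; exact ⟨by linarith, le_rfl⟩)))
      rw [intervalIntegral.integral_undef h1, intervalIntegral.integral_undef hint]
  -- rewrite Wrep
  have hW : Wrep F t x = (1 / (4 * π)) * (t⁻¹ * ∫ s in a..1, g s) := by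
    rw [Wrep, ← ha]
    congr 1
    rw [← intervalIntegral.integral_const_mul]
    apply intervalIntegral.integral_congr
    intro s _
    rw [hg]
    simp only
    rw [← integral_const_mul]
    congr 1
    funext η
    ring
  rw [hW, hkey, Utilde, ← hc, ← hg]
  ring
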